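/- Let ω ∈ ℝ, T ≥ 0, and a : Fin N → ℝ. Define complex-valued paths γ_k(t) = exp(𝒾(ω·t + a_k)) on [0,T]. Then for every M ≥ 1 and every multi-index I = (i_1,…,i_M), the level-M path signature equals S_I(γ) = exp(𝒾·(a_{i_1} + ⋯ + a_{i_M})) / M! · (exp(𝒾ωT) − 1)^M. -/

import Mathlib

open MeasureTheory Complex

/-- The path signature `S_I(γ)` of a complex-valued path `γ = (γ_1, …, γ_N) : [0,T] → ℂ^N`
with respect to the multi-index `I = (i_1, …, i_M)`: the `M`-fold iterated integral
`∫_{0 ≤ t_1 ≤ ⋯ ≤ t_M ≤ T} γ̇_{i_1}(t_1) ⋯ γ̇_{i_M}(t_M) dt_1 ⋯ dt_M`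
over the ordered simplex. -/
lemma simplex_int (M : ℕ) (T : ℝ) (g : ℝ → ℂ) (hg : Continuous g) :
    (Nat.factorial M : ℂ) *
      ∫ t in {t : Fin M → ℝ | Monotone t ∧ ∀ k, t k ∈ Set.Icc 0 T}, ∏ k, g (t k)
      = (∫ x in Set.Icc 0 T, g x) ^ M := by
  classical
  set S : Equiv.Perm (Fin M) → Set (Fin M → ℝ) :=
    fun σ => {t | Monotone (t ∘ σ) ∧ ∀ k, t k ∈ Set.Icc 0 T} with hS
  set cube : Set (Fin M → ℝ) := {t | ∀ k, t k ∈ Set.Icc 0 T} with hcube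
  have hh : Continuous fun t : Fin M → ℝ => ∏ k, g (t k) :=
    continuous_finset_prod _ fun k _ => hg.comp (continuous_apply k)
  -- the measurable equiv t ↦ t ∘ σ
  have key : ∀ σ : Equiv.Perm (Fin M),
      MeasurableSet (S σ) ∧
      ∫ t in S σ, ∏ k, g (t k) = ∫ t in S 1, ∏ k, g (t k) := by
    intro σ
    set E := MeasurableEquiv.piCongrLeft (fun _ : Fin M => ℝ) (σ⁻¹ : Fin M ≃ Fin M)
      with hE
    have hEapp : ∀ (t : Fin M → ℝ) (k : Fin M), E t k = t (σ k) := by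
      intro t k
      have := Equiv.piCongrLeft_apply_apply (fun _ : Fin M => ℝ)
        ((σ⁻¹ : Fin M ≃ Fin M)) t (σ k)
      simpa [hE, MeasurableEquiv.coe_piCongrLeft] using this
    have hpre : E ⁻¹' (S 1) = S σ := by
      ext t
      simp only [Set.mem_preimage, hS, Set.mem_setOf_eq, Equiv.Perm.coe_one, Function.comp_id]
      constructor
      · rintro ⟨h1, h2⟩
        refine ⟨?_, fun k => by simpa [hEapp] using h2 (σ⁻¹ k)⟩
        have hEt : E t = t ∘ σ := funext fun k => hEapp t k
        rwa [hEt] at h1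
      · rintro ⟨h1, h2⟩
        refine ⟨?_, fun k => by simpa [hEapp] using h2 (σ k)⟩
        have hEt : E t = t ∘ σ := funext fun k => hEapp t k
        rw [hEt]; exact h1
    have hS1 : MeasurableSet (S 1) := by
      have h1 : MeasurableSet {t : Fin M → ℝ | Monotone t} := by
        have : {t : Fin M → ℝ | Monotone t}
            = ⋂ (i : Fin M) (j : Fin M) (_ : i ≤ j), {t | t i ≤ t j} := by
          ext t
          constructor
          · intro h; simp only [Set.mem_iInter]; intro i j hij; exact h hij
          · intro h a b hab
            simp only [Set.mem_iInter, Set.mem_setOf_eq] at h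
            exact h a b hab
        rw [this]
        exact MeasurableSet.iInter fun i => MeasurableSet.iInter fun j =>
          MeasurableSet.iInter fun _ =>
            measurableSet_le (measurable_pi_apply i) (measurable_pi_apply j)
      have h2 : MeasurableSet cube := by
        have : cube = Set.pi Set.univ fun _ : Fin M => Set.Icc (0:ℝ) T := by
          ext t; simp [hcube, Set.mem_univ_pi, Pi.le_def, forall_and]
        rw [this]
        exact MeasurableSet.univ_pi fun _ => measurableSet_Icc
      simpa [hS, hcube, Set.setOf_and] using h1.inter h2
    have hmp := MeasureTheory.volume_measurePreserving_piCongrLeft (fun _ : Fin M => ℝ)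
      (σ⁻¹ : Fin M ≃ Fin M)
    constructor
    · rw [← hpre]; exact E.measurable hS1
    · have := hmp.setIntegral_preimage_emb E.measurableEmbedding
        (fun t => ∏ k, g (t k)) (S 1)
      rw [hpre] at this
      rw [← this]
      refine setIntegral_congr_fun ?_ fun t _ => ?_
      · rw [← hpre]; exact E.measurable hS1
      · show (∏ k, g (t k)) = ∏ k, g (E t k)
        simp only [hEapp]
        exact (Equiv.prod_comp σ fun k => g (t k)).symm
  -- measurability of cube
  have hcubeM : MeasurableSet cube := by
    have : cube = Set.pi Set.univ fun _ : Fin M => Set.Icc (0:ℝ) T := by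
      ext t; simp [hcube, Set.mem_univ_pi, Pi.le_def, forall_and]
    rw [this]
    exact MeasurableSet.univ_pi fun _ => measurableSet_Icc
  -- union over permutations is the cube
  have hunion : (⋃ σ, S σ) = cube := by
    apply Set.Subset.antisymm
    · exact Set.iUnion_subset fun σ t ht => ht.2
    · intro t ht
      exact Set.mem_iUnion.2 ⟨Tuple.sort t, Tuple.monotone_sort t, ht⟩
  -- pairwise a.e. disjoint
  have hdisj : Pairwise (Function.onFun (MeasureTheory.AEDisjoint volume) S) := by
    intro σ τ hστ
    have hsub : S σ ∩ S τ ⊆ ⋃ (i : Fin M) (j : Fin M) (_ : i ≠ j), {t : Fin M → ℝ | t i = t j} := by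
      intro t ⟨h1, h2⟩
      by_contra hmem
      simp only [Set.mem_iUnion, Set.mem_setOf_eq, not_exists] at hmem
      have hinj : Function.Injective t := by
        intro i j hij
        by_contra hne
        exact hmem i j hne hij
      have := Tuple.unique_monotone h1.1 h2.1
      apply hστ
      apply Equiv.ext
      intro k
      exact hinj (congrFun this k)
    refine measure_mono_null hsub ?_
    refine measure_iUnion_null fun i => measure_iUnion_null fun j => measure_iUnion_null fun hij => ?_
    have : {t : Fin M → ℝ | t i = t j}
        = (LinearMap.ker ((LinearMap.proj (R := ℝ) (φ := fun _ : Fin M => ℝ) i) - LinearMap.proj j)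
            : Set (Fin M → ℝ)) := by
      ext t
      simp [LinearMap.mem_ker, sub_eq_zero]
    rw [this]
    apply MeasureTheory.Measure.addHaar_submodule
    intro htop
    have hmem : Pi.single i (1:ℝ) ∈
        LinearMap.ker ((LinearMap.proj (R := ℝ) (φ := fun _ : Fin M => ℝ) i) - LinearMap.proj j) :=
      htop ▸ Submodule.mem_top
    simp [LinearMap.mem_ker, LinearMap.sub_apply, Pi.single_apply, hij, Ne.symm hij] at hmem
  -- integrability on the cube
  have hint : IntegrableOn (fun t : Fin M → ℝ => ∏ k, g (t k)) cube volume := by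
    apply hh.continuousOn.integrableOn_compact
    have : cube = Set.pi Set.univ fun _ : Fin M => Set.Icc (0:ℝ) T := by
      ext t; simp [hcube, Set.mem_univ_pi, Pi.le_def, forall_and]
    rw [this]
    exact isCompact_univ_pi fun _ => isCompact_Icc
  -- sum over permutations
  have hsum : ∫ t in cube, ∏ k, g (t k)
      = (Nat.factorial M : ℂ) * ∫ t in S 1, ∏ k, g (t k) := by
    rw [← hunion, MeasureTheory.integral_iUnion_ae
      (fun σ => ((key σ).1).nullMeasurableSet) hdisj (hunion ▸ hint)]
    rw [tsum_fintype]
    simp_rw [fun σ => (key σ).2]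
    rw [Finset.sum_const, Finset.card_univ, Fintype.card_perm, Fintype.card_fin,
      nsmul_eq_mul]
  -- cube integral is a product
  have hcubeint : ∫ t in cube, ∏ k, g (t k) = (∫ x in Set.Icc 0 T, g x) ^ M := by
    rw [← MeasureTheory.integral_indicator hcubeM]
    have : Set.indicator cube (fun t : Fin M → ℝ => ∏ k, g (t k))
        = fun t => ∏ k, Set.indicator (Set.Icc 0 T) g (t k) := by
      funext t
      by_cases h : t ∈ cube
      · rw [Set.indicator_of_mem h]
        exact Finset.prod_congr rfl fun k _ => (Set.indicator_of_mem (h k) g).symm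
      · rw [Set.indicator_of_notMem h]
        obtain ⟨k, hk⟩ := not_forall.1 h
        exact (Finset.prod_eq_zero (Finset.mem_univ k)
          (Set.indicator_of_notMem hk g)).symm
    rw [this, MeasureTheory.volume_pi]
    beta_reduce
    rw [MeasureTheory.integral_fintype_prod_eq_pow (ι := Fin M)
      (Set.indicator (Set.Icc 0 T) g), MeasureTheory.integral_indicator measurableSet_Icc,
      Fintype.card_fin]
  have hS1eq : S 1 = {t : Fin M → ℝ | Monotone t ∧ ∀ k, t k ∈ Set.Icc 0 T} := by
    simp [hS]
  rw [← hS1eq, ← hsum, hcubeint]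

lemma hasDerivAt_aux (ω : ℝ) (c : ℂ) (s : ℝ) :
    HasDerivAt (fun t : ℝ => Complex.exp (Complex.I * ((ω:ℂ) * (t:ℂ) + c)))
      (Complex.I * ω * Complex.exp (Complex.I * ((ω:ℂ) * (s:ℂ) + c))) s := by
  have h1 : HasDerivAt (fun t : ℝ => ((t : ℂ))) 1 s := by
    exact Complex.ofRealCLM.hasDerivAt (x := s)
  have h4 : HasDerivAt (fun t : ℝ => Complex.I * ((ω:ℂ) * (t:ℂ) + c)) (Complex.I * ω) s := by
    simpa using ((h1.const_mul ((ω:ℂ))).add_const c).const_mul Complex.I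
  simpa [mul_comm] using h4.cexp

lemma icc_int (ω T : ℝ) (hT : 0 ≤ T) :
    ∫ x in Set.Icc (0:ℝ) T, Complex.I * ω * Complex.exp (Complex.I * ((ω:ℂ) * (x:ℂ)))
      = Complex.exp (Complex.I * (ω:ℂ) * (T:ℂ)) - 1 := by
  rw [MeasureTheory.integral_Icc_eq_integral_Ioc, ← intervalIntegral.integral_of_le hT]
  have := intervalIntegral.integral_eq_sub_of_hasDerivAt
    (f := fun t : ℝ => Complex.exp (Complex.I * ((ω:ℂ) * (t:ℂ) + 0)))
    (f' := fun t : ℝ => Complex.I * ω * Complex.exp (Complex.I * ((ω:ℂ) * (t:ℂ) + 0)))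
    (a := 0) (b := T) (fun x _ => hasDerivAt_aux ω 0 x)
    ((by fun_prop :
      Continuous fun t : ℝ => Complex.I * ω * Complex.exp (Complex.I * ((ω:ℂ) * (t:ℂ) + 0))).intervalIntegrable 0 T)
  simpa [mul_assoc] using this

noncomputable def pathSigC {N M : ℕ} (γ : Fin N → ℝ → ℂ) (T : ℝ) (I : Fin M → Fin N) : ℂ :=
  ∫ t in {t : Fin M → ℝ | Monotone t ∧ ∀ k, t k ∈ Set.Icc 0 T},
    ∏ k, deriv (γ (I k)) (t k)

/-- For the circle-valued steady-state paths `γ_k(t) = exp(𝒾(ω t + a_k))` on `[0,T]`, every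
level-`M` signature (`M ≥ 1`) equals `exp(𝒾 (a_{i_1} + ⋯ + a_{i_M})) / M! · (e^{𝒾ωT} − 1)^M`. -/
theorem steadyState_pathSig_exp (N : ℕ) (ω T : ℝ) (hT : 0 ≤ T) (a : Fin N → ℝ)
    (M : ℕ) (hM : 1 ≤ M) (I : Fin M → Fin N) :
    pathSigC (fun k t => Complex.exp (Complex.I * ((ω : ℂ) * (t : ℂ) + (a k : ℂ)))) T I
      = Complex.exp (Complex.I * ∑ k, (a (I k) : ℂ)) / (Nat.factorial M)
          * (Complex.exp (Complex.I * (ω : ℂ) * (T : ℂ)) - 1) ^ M := by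
  unfold pathSigC
  have hderiv : ∀ (k : Fin N),
      deriv (fun t : ℝ => Complex.exp (Complex.I * ((ω:ℂ) * (t:ℂ) + (a k : ℂ))))
        = fun s : ℝ => Complex.I * ω * Complex.exp (Complex.I * ((ω:ℂ) * (s:ℂ) + (a k : ℂ))) :=
    fun k => funext fun s => (hasDerivAt_aux ω (a k) s).deriv
  simp only [hderiv]
  have hintegrand : ∀ t : Fin M → ℝ,
      (∏ k, Complex.I * ω * Complex.exp (Complex.I * ((ω:ℂ) * (t k : ℂ) + (a (I k) : ℂ))))
        = Complex.exp (Complex.I * ∑ k, (a (I k) : ℂ))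
            * ∏ k, (Complex.I * ω * Complex.exp (Complex.I * ((ω:ℂ) * (t k : ℂ)))) := by
    intro t
    calc (∏ k, Complex.I * ω * Complex.exp (Complex.I * ((ω:ℂ) * (t k : ℂ) + (a (I k) : ℂ))))
        = ∏ k, (Complex.exp (Complex.I * (a (I k) : ℂ))
            * (Complex.I * ω * Complex.exp (Complex.I * ((ω:ℂ) * (t k : ℂ))))) :=
          Finset.prod_congr rfl fun k _ => by rw [mul_add, Complex.exp_add]; ring
      _ = (∏ k, Complex.exp (Complex.I * (a (I k) : ℂ)))
            * ∏ k, (Complex.I * ω * Complex.exp (Complex.I * ((ω:ℂ) * (t k : ℂ)))) :=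
          Finset.prod_mul_distrib
      _ = Complex.exp (Complex.I * ∑ k, (a (I k) : ℂ))
            * ∏ k, (Complex.I * ω * Complex.exp (Complex.I * ((ω:ℂ) * (t k : ℂ)))) := by
          rw [← Complex.exp_sum, ← Finset.mul_sum]
  simp only [hintegrand]
  rw [MeasureTheory.integral_const_mul]
  have hfact : ((Nat.factorial M : ℂ)) ≠ 0 := by
    exact_mod_cast Nat.factorial_ne_zero M
  have hs := simplex_int M T (fun x => Complex.I * ω * Complex.exp (Complex.I * ((ω:ℂ) * (x:ℂ))))
    (by fun_prop)
  rw [icc_int ω T hT] at hs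
  have : (∫ t in {t : Fin M → ℝ | Monotone t ∧ ∀ k, t k ∈ Set.Icc 0 T},
      ∏ k, (Complex.I * ω * Complex.exp (Complex.I * ((ω:ℂ) * (t k : ℂ)))))
      = (Complex.exp (Complex.I * (ω:ℂ) * (T:ℂ)) - 1) ^ M / (Nat.factorial M : ℂ) := by
    rw [eq_div_iff hfact, mul_comm]
    simpa using hs
  rw [this]
  ring
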